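/- Let c_1,...,c_n be binary supermodular cost functions on [m] with c_i(∅)=0, with associated matroids M_i (rank functions r_i(S)=|S|-c_i(S)). Let B = B_1 ∪ ... ∪ B_n be a basis of the union matroid with each B_i independent in M_i and the B_i pairwise disjoint. Then every complete partition (B̄_1,...,B̄_n) of [m] with B_i ⊆ B̄_i for all i achieves the minimum social cost: ∑_i c_i(B̄_i) = min over all partitions of [m] of ∑_i c_i(A_i). -/

import Mathlib

/-- `A` is a partition (complete allocation) of the chores `Fin m` among `n` agents. -/
def IsPartition {n m : ℕ} (A : Fin n → Finset (Fin m)) : Prop :=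
  (∀ i j : Fin n, i ≠ j → Disjoint (A i) (A j)) ∧
    Finset.univ.biUnion A = (Finset.univ : Finset (Fin m))

/-- Binary marginals for a nonnegative-integer-valued cost function. -/
def BinaryMarginals {m : ℕ} (c : Finset (Fin m) → ℕ) : Prop :=
  ∀ (S : Finset (Fin m)) (a : Fin m), a ∉ S →
    c (insert a S) = c S ∨ c (insert a S) = c S + 1

/-- Supermodularity (increasing marginals), in addition form. -/
def Supermod {m : ℕ} (c : Finset (Fin m) → ℕ) : Prop :=
  ∀ (S T : Finset (Fin m)) (a : Fin m), S ⊆ T → a ∉ T →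
    c (insert a S) + c T ≤ c (insert a T) + c S

/-- `T` is independent in the union of the matroids `M i` associated with the binary
supermodular costs `c i` (where `S` is independent in `M i` exactly when `c i S = 0`). -/
def UnionIndep {n m : ℕ} (c : Fin n → Finset (Fin m) → ℕ) (T : Finset (Fin m)) : Prop :=
  ∃ I : Fin n → Finset (Fin m), (∀ i, c i (I i) = 0) ∧ T = Finset.univ.biUnion I


lemma card_bound_of_binary {m : ℕ} {c : Finset (Fin m) → ℕ} (hm : BinaryMarginals c) :
    ∀ (T S : Finset (Fin m)), S ⊆ T → c T + S.card ≤ c S + T.card := by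
  intro T
  induction T using Finset.strongInduction with
  | _ T ih =>
    intro S hST
    rcases eq_or_ssubset_of_subset hST with rfl | hss
    · omega
    · obtain ⟨a, haT, haS⟩ := Finset.exists_of_ssubset hss
      have h1 : insert a (T.erase a) = T := Finset.insert_erase haT
      have h2 := hm (T.erase a) a (Finset.notMem_erase a T)
      have h3 : S ⊆ T.erase a := Finset.subset_erase.mpr ⟨hST, haS⟩
      have h4 := ih (T.erase a) (Finset.erase_ssubset haT) S h3
      have h5 : (T.erase a).card + 1 = T.card := Finset.card_erase_add_one haT
      rw [h1] at h2
      omega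

lemma all_erase_eq {m : ℕ} {c : Finset (Fin m) → ℕ} (hsup : Supermod c) (h0 : c ∅ = 0)
    (S : Finset (Fin m)) (h : ∀ a ∈ S, c (S.erase a) = c S) : c S = 0 := by
  suffices h' : ∀ U, U ⊆ S → c U = 0 from h' S le_rfl
  intro U
  induction U using Finset.induction_on with
  | empty => intro _; exact h0
  | insert _ _ ha ih =>
    rename_i a U
    intro hUS
    have haS : a ∈ S := hUS (Finset.mem_insert_self a U)
    have hUS' : U ⊆ S := (Finset.insert_subset_iff.mp hUS).2
    have hU : U ⊆ S.erase a := Finset.subset_erase.mpr ⟨hUS', ha⟩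
    have hs := hsup U (S.erase a) a hU (Finset.notMem_erase a S)
    rw [Finset.insert_erase haS, h a haS, ih hUS'] at hs
    omega

lemma exists_indep_subset {m : ℕ} {c : Finset (Fin m) → ℕ} (hm : BinaryMarginals c)
    (hsup : Supermod c) (h0 : c ∅ = 0) (S : Finset (Fin m)) :
    ∃ I, I ⊆ S ∧ c I = 0 ∧ I.card + c S = S.card := by
  induction S using Finset.strongInduction with
  | _ S ih =>
    by_cases hc : c S = 0
    · exact ⟨S, le_rfl, hc, by omega⟩
    · have hex : ∃ a ∈ S, c (S.erase a) + 1 = c S := by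
        by_contra h
        push_neg at h
        apply hc
        apply all_erase_eq hsup h0
        intro a ha
        have h2 := hm (S.erase a) a (Finset.notMem_erase a S)
        rw [Finset.insert_erase ha] at h2
        have := h a ha
        omega
      obtain ⟨a, ha, hca⟩ := hex
      obtain ⟨I, hIs, hI0, hIc⟩ := ih (S.erase a) (Finset.erase_ssubset ha)
      have h5 : (S.erase a).card + 1 = S.card := Finset.card_erase_add_one ha
      exact ⟨I, hIs.trans (Finset.erase_subset a S), hI0, by omega⟩

/-- if `B = B 1 ∪ … ∪ B n` is a basis of the union matroid, with the `B i`
pairwise disjoint and each `B i` independent in `M i`, then every complete allocation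
extending `(B 1, …, B n)` achieves the minimum social cost. -/
theorem extension_of_basis_minimizes_social_cost (n m : ℕ) (hn : 1 ≤ n)
    (c : Fin n → Finset (Fin m) → ℕ)
    (hmarg : ∀ i, BinaryMarginals (c i)) (hsuper : ∀ i, Supermod (c i))
    (h0 : ∀ i, c i ∅ = 0)
    (rhat : ℕ)
    (hrhat : IsGreatest {s : ℕ | ∃ T : Finset (Fin m), UnionIndep c T ∧ s = T.card} rhat)
    (B : Fin n → Finset (Fin m))
    (hBdisj : ∀ i j : Fin n, i ≠ j → Disjoint (B i) (B j))
    (hBindep : ∀ i, c i (B i) = 0)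
    (hBbasis : (Finset.univ.biUnion B).card = rhat)
    (Bbar : Fin n → Finset (Fin m)) (hBbar : IsPartition Bbar)
    (hext : ∀ i, B i ⊆ Bbar i) :
    IsLeast {s : ℕ | ∃ A : Fin n → Finset (Fin m), IsPartition A ∧ s = ∑ i, c i (A i)}
      (∑ i, c i (Bbar i)) := by
  have hcardBbar : ∑ i, (Bbar i).card = m := by
    rw [← Finset.card_biUnion (fun i _ j _ hij => hBbar.1 i j hij), hBbar.2]
    simp
  have hrB : ∑ i, (B i).card = rhat := by
    rw [← Finset.card_biUnion (fun i _ j _ hij => hBdisj i j hij), hBbasis]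
  have hupper : ∑ i, c i (Bbar i) + rhat ≤ m := by
    have hb : ∀ i, c i (Bbar i) + (B i).card ≤ (Bbar i).card := by
      intro i
      have := card_bound_of_binary (hmarg i) (Bbar i) (B i) (hext i)
      rw [hBindep i] at this; omega
    calc ∑ i, c i (Bbar i) + rhat = ∑ i, (c i (Bbar i) + (B i).card) := by
          rw [Finset.sum_add_distrib, hrB]
      _ ≤ ∑ i, (Bbar i).card := Finset.sum_le_sum (fun i _ => hb i)
      _ = m := hcardBbar
  constructor
  · exact ⟨Bbar, hBbar, rfl⟩
  · rintro s ⟨A, hA, rfl⟩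
    choose I hIsub hI0 hIc using fun i => exists_indep_subset (hmarg i) (hsuper i) (h0 i) (A i)
    have hIdisj : ∀ i j : Fin n, i ≠ j → Disjoint (I i) (I j) :=
      fun i j hij => (hA.1 i j hij).mono (hIsub i) (hIsub j)
    have hTcard : (Finset.univ.biUnion I).card ≤ rhat :=
      hrhat.2 ⟨Finset.univ.biUnion I, ⟨I, hI0, rfl⟩, rfl⟩
    have hcardA : ∑ i, (A i).card = m := by
      rw [← Finset.card_biUnion (fun i _ j _ hij => hA.1 i j hij), hA.2]
      simp
    have hIcard : ∑ i, (I i).card = (Finset.univ.biUnion I).card :=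
      (Finset.card_biUnion (fun i _ j _ hij => hIdisj i j hij)).symm
    have hlow : m ≤ ∑ i, c i (A i) + rhat := by
      have e1 : ∑ i, (A i).card = ∑ i, ((I i).card + c i (A i)) :=
        Finset.sum_congr rfl (fun i _ => (hIc i).symm)
      rw [Finset.sum_add_distrib] at e1
      omega
    omega
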